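/- For n ≥ 1 let Rₙ := 𝔽₂[x]/(xⁿ) and let R := 𝔽₂[[x]] be the ring of formal power series over 𝔽₂. The canonical map G(R) → lim_n G(Rₙ), sending the square class of a unit u ∈ Rˣ to the compatible family of square classes of its truncations in each Rₙ, is an isomorphism of abelian groups, where lim_n G(Rₙ) is the inverse limit of the groups of square classes along the maps induced by the projections R_{n+1} → Rₙ (realized as the subgroup of the product ∏_n G(Rₙ) consisting of compatible families). -/

import Mathlib

noncomputable section

def squareUnits (R : Type) [CommRing R] : Subgroup Rˣ :=
  (powMonoidHom 2 : Rˣ →* Rˣ).range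

def SqCl (R : Type) [CommRing R] : Type := Rˣ ⧸ squareUnits R

instance (R : Type) [CommRing R] : CommGroup (SqCl R) :=
  QuotientGroup.Quotient.commGroup (squareUnits R)

def cls {R : Type} [CommRing R] (a : Rˣ) : SqCl R := QuotientGroup.mk a

/-- The group homomorphism on square classes induced by a ring homomorphism. -/
def clsMap {R S : Type} [CommRing R] [CommRing S] (φ : R →+* S) : SqCl R →* SqCl S :=
  QuotientGroup.map (squareUnits R) (squareUnits S) (Units.map (φ : R →* S)) (by
    rintro x ⟨y, rfl⟩
    exact ⟨Units.map (φ : R →* S) y, by simp [powMonoidHom]⟩)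

/-- The ring `𝔽₂[x]/(xⁿ)` of truncated polynomials, presented as the quotient of `𝔽₂[[x]]`
by the ideal `(xⁿ)`. -/
abbrev RT (n : ℕ) : Type :=
  PowerSeries (ZMod 2) ⧸ Ideal.span {(PowerSeries.X : PowerSeries (ZMod 2)) ^ n}

/-- The canonical projection (truncation) `𝔽₂[[x]] → 𝔽₂[x]/(xⁿ)`. -/
def truncProj (n : ℕ) : PowerSeries (ZMod 2) →+* RT n :=
  Ideal.Quotient.mk (Ideal.span {(PowerSeries.X : PowerSeries (ZMod 2)) ^ n})

/-- The canonical projection `𝔽₂[x]/(x^{n+1}) → 𝔽₂[x]/(xⁿ)`. -/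
def projDown (n : ℕ) : RT (n + 1) →+* RT n :=
  Ideal.Quotient.factor
    (Ideal.span_singleton_le_span_singleton.mpr (pow_dvd_pow PowerSeries.X n.le_succ))

/-- The canonical comparison map from the square classes of `𝔽₂[[x]]` to the product of the
square classes of all the truncations `𝔽₂[x]/(xⁿ)`, `n ≥ 1`. -/
def cmpMap : SqCl (PowerSeries (ZMod 2)) →* ∀ n : ℕ, SqCl (RT (n + 1)) :=
  Pi.monoidHom fun n => clsMap (truncProj (n + 1))

namespace Stmt18Aux

abbrev Rps := PowerSeries (ZMod 2)

lemma zmod2_mul_self : ∀ a : ZMod 2, a * a = a := by decide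

lemma coeff_sq_odd (f : Rps) {n : ℕ} (hn : ¬ Even n) :
    PowerSeries.coeff n (f ^ 2) = 0 := by
  rw [sq, PowerSeries.coeff_mul]
  refine Finset.sum_involution (fun p _ => (p.2, p.1)) ?_ ?_ ?_ ?_
  · intro a ha
    simp only [mul_comm]
    exact CharTwo.add_self_eq_zero _
  · intro a ha h heq
    apply hn
    have : a.1 + a.2 = n := Finset.HasAntidiagonal.mem_antidiagonal.mp ha
    have h2 : a.2 = a.1 := congrArg Prod.fst heq
    exact ⟨a.1, by omega⟩
  · intro a ha
    rw [Finset.HasAntidiagonal.mem_antidiagonal] at *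
    omega
  · intro a ha; rfl

lemma coeff_sq_even (f : Rps) (m : ℕ) :
    PowerSeries.coeff (2 * m) (f ^ 2) = PowerSeries.coeff m f := by
  rw [sq, PowerSeries.coeff_mul]
  have hmem : ((m, m) : ℕ × ℕ) ∈ Finset.HasAntidiagonal.antidiagonal (2 * m) := by
    rw [Finset.HasAntidiagonal.mem_antidiagonal]; omega
  rw [← Finset.add_sum_erase _ _ hmem]
  have hz : ∑ p ∈ (Finset.HasAntidiagonal.antidiagonal (2 * m)).erase (m, m),
      PowerSeries.coeff p.1 f * PowerSeries.coeff p.2 f = 0 := by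
    refine Finset.sum_involution (fun p _ => (p.2, p.1)) ?_ ?_ ?_ ?_
    · intro a ha
      simp only [mul_comm]
      exact CharTwo.add_self_eq_zero _
    · intro a ha h heq
      rw [Finset.mem_erase, Finset.HasAntidiagonal.mem_antidiagonal] at ha
      have h2 : a.2 = a.1 := congrArg Prod.fst heq
      apply ha.1
      have : a.1 = m := by omega
      exact Prod.ext this (by omega)
    · intro a ha
      rw [Finset.mem_erase, Finset.HasAntidiagonal.mem_antidiagonal] at *
      constructor
      · intro hc
        apply ha.1
        have h1 : a.2 = m := congrArg Prod.fst hc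
        exact Prod.ext (by omega) (by omega)
      · omega
    · intro a ha; rfl
  rw [hz, add_zero, zmod2_mul_self]

/-- A unit all of whose odd coefficients vanish is a square. -/
lemma exists_sqrt (f : Rps) (h : ∀ n : ℕ, ¬ Even n → PowerSeries.coeff n f = 0) :
    (PowerSeries.mk (fun i => PowerSeries.coeff (2 * i) f)) ^ 2 = f := by
  ext n
  by_cases hn : Even n
  · obtain ⟨m, hm⟩ := hn
    have : n = 2 * m := by omega
    subst this
    rw [coeff_sq_even, PowerSeries.coeff_mk]
  · rw [coeff_sq_odd _ hn, h n hn]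

lemma truncProj_eq_iff (n : ℕ) (a b : Rps) :
    truncProj n a = truncProj n b ↔ (PowerSeries.X : Rps) ^ n ∣ a - b := by
  rw [truncProj, Ideal.Quotient.mk_eq_mk_iff_sub_mem, Ideal.mem_span_singleton]

lemma coeff_eq_of_dvd {n i : ℕ} {a b : Rps} (h : (PowerSeries.X : Rps) ^ n ∣ a - b)
    (hi : i < n) : PowerSeries.coeff i a = PowerSeries.coeff i b := by
  have := (PowerSeries.X_pow_dvd_iff.mp h) i hi
  rw [map_sub, sub_eq_zero] at this
  exact this

/-- Units of `RT (n+1)` lift to units of the power series ring. -/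
lemma exists_unit_lift (n : ℕ) (v : (RT (n + 1))ˣ) :
    ∃ w : Rpsˣ, truncProj (n + 1) (w : Rps) = (v : RT (n + 1)) := by
  obtain ⟨f, hf⟩ := Ideal.Quotient.mk_surjective (v : RT (n + 1))
  obtain ⟨f', hf'⟩ := Ideal.Quotient.mk_surjective ((v⁻¹ : (RT (n+1))ˣ) : RT (n + 1))
  have h1 : truncProj (n + 1) (f * f') = truncProj (n + 1) 1 := by
    rw [map_mul, map_one]
    show Ideal.Quotient.mk _ f * Ideal.Quotient.mk _ f' = 1
    rw [hf, hf', Units.mul_inv]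
  rw [truncProj_eq_iff] at h1
  have h0 : PowerSeries.coeff 0 (f * f') = PowerSeries.coeff 0 (1 : Rps) :=
    coeff_eq_of_dvd h1 (Nat.succ_pos n)
  rw [PowerSeries.coeff_zero_eq_constantCoeff, map_mul, map_one] at h0
  have hu : IsUnit (PowerSeries.constantCoeff f) := IsUnit.of_mul_eq_one _ h0
  have huf : IsUnit f := PowerSeries.isUnit_iff_constantCoeff.mpr hu
  exact ⟨huf.unit, by rw [IsUnit.unit_spec]; exact hf⟩

lemma projDown_truncProj (n : ℕ) (x : Rps) :
    projDown n (truncProj (n + 1) x) = truncProj n x :=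
  Ideal.Quotient.factor_mk _ x

lemma clsMap_cls {R S : Type} [CommRing R] [CommRing S] (φ : R →+* S) (u : Rˣ) :
    clsMap φ (cls u) = cls (Units.map (φ : R →* S) u) := rfl

lemma mem_squareUnits {R : Type} [CommRing R] {x : Rˣ} :
    x ∈ squareUnits R ↔ ∃ y : Rˣ, y ^ 2 = x := Iff.rfl

end Stmt18Aux

namespace Stmt18Aux

instance (n : ℕ) : (squareUnits (RT n)).Normal :=
  ⟨fun a ha g => by rwa [mul_comm g a, mul_inv_cancel_right]⟩

lemma cmpMap_cls (u : Rpsˣ) (n : ℕ) :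
    cmpMap (cls u) n = cls (Units.map ((truncProj (n + 1) : Rps →+* RT (n + 1)) : Rps →* RT (n + 1)) u) := rfl

lemma injective_cmp : Function.Injective cmpMap := by
  rw [injective_iff_map_eq_one]
  intro a ha
  obtain ⟨u, rfl⟩ := QuotientGroup.mk_surjective a
  have key : ∀ n : ℕ, ∃ s : Rpsˣ,
      (PowerSeries.X : Rps) ^ (n + 1) ∣ (u : Rps) - (s : Rps) ^ 2 := by
    intro n
    have h1 : cls (Units.map ((truncProj (n + 1) : Rps →+* RT (n + 1)) : Rps →* RT (n + 1)) u)
        = 1 := by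
      rw [← cmpMap_cls]
      exact congrFun ha n
    have h1' : Units.map ((truncProj (n + 1) : Rps →+* RT (n + 1)) : Rps →* RT (n + 1)) u
        ∈ squareUnits (RT (n + 1)) := by
      rw [cls] at h1
      exact (QuotientGroup.eq_one_iff _).mp h1
    obtain ⟨c, hc⟩ := h1'
    obtain ⟨sc, hsc⟩ := exists_unit_lift n c
    refine ⟨sc, ?_⟩
    rw [← truncProj_eq_iff]
    have hval : ((c : (RT (n+1))ˣ) : RT (n+1)) ^ 2 = truncProj (n + 1) (u : Rps) := by
      have := congrArg (Units.val) hc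
      simpa [powMonoidHom] using this
    rw [map_pow, hsc, hval]
  have hodd : ∀ i : ℕ, ¬ Even i → PowerSeries.coeff i (u : Rps) = 0 := by
    intro i hi
    obtain ⟨sc, hsc⟩ := key i
    rw [coeff_eq_of_dvd hsc (Nat.lt_succ_self i), coeff_sq_odd _ hi]
  have hv : (PowerSeries.mk (fun i => PowerSeries.coeff (2 * i) (u : Rps))) ^ 2
      = (u : Rps) := exists_sqrt _ hodd
  have hvu : IsUnit (PowerSeries.mk (fun i => PowerSeries.coeff (2 * i) (u : Rps))) := by
    rw [PowerSeries.isUnit_iff_constantCoeff]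
    have h0 : PowerSeries.constantCoeff
        (PowerSeries.mk (fun i => PowerSeries.coeff (2 * i) (u : Rps)))
        = PowerSeries.constantCoeff (u : Rps) := by
      rw [← PowerSeries.coeff_zero_eq_constantCoeff_apply, PowerSeries.coeff_mk]
      simp
    rw [h0]
    exact (u.isUnit).map (PowerSeries.constantCoeff)
  refine (QuotientGroup.eq_one_iff _).mpr ?_
  refine ⟨hvu.unit, Units.ext ?_⟩
  show ((hvu.unit) : Rps) ^ 2 = (u : Rps)
  rw [IsUnit.unit_spec, hv]

end Stmt18Aux

namespace Stmt18Aux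

lemma range_subset :
    Set.range cmpMap ⊆
      {g : ∀ n : ℕ, SqCl (RT (n + 1)) |
        ∀ n : ℕ, clsMap (projDown (n + 1)) (g (n + 1)) = g n} := by
  rintro p ⟨a, rfl⟩
  obtain ⟨u, rfl⟩ := QuotientGroup.mk_surjective a
  intro n
  show clsMap (projDown (n + 1)) (cmpMap (cls u) (n + 1)) = cmpMap (cls u) n
  rw [cmpMap_cls, cmpMap_cls, clsMap_cls]
  congr 1

lemma surj_onto (g : ∀ n : ℕ, SqCl (RT (n + 1)))
    (hg : ∀ n : ℕ, clsMap (projDown (n + 1)) (g (n + 1)) = g n) :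
    ∃ a, cmpMap a = g := by
  choose v hv using fun n => QuotientGroup.mk_surjective (g n)
  choose w hw using fun n => exists_unit_lift n (v n)
  have key : ∀ n : ℕ, ∃ s : Rpsˣ,
      (PowerSeries.X : Rps) ^ (n + 1) ∣ (w (n + 1) : Rps) * (s : Rps) ^ 2 - (w n : Rps) := by
    intro n
    have h1 : cls (Units.map ((projDown (n + 1) : RT (n + 2) →+* RT (n + 1)) :
        RT (n + 2) →* RT (n + 1)) (v (n + 1))) = cls (v n) := by
      rw [← clsMap_cls]
      show clsMap (projDown (n + 1)) (QuotientGroup.mk (v (n + 1))) = QuotientGroup.mk (v n)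
      rw [hv (n + 1), hv n]
      exact hg n
    have h2 : (Units.map ((projDown (n + 1) : RT (n + 2) →+* RT (n + 1)) :
        RT (n + 2) →* RT (n + 1)) (v (n + 1)))⁻¹ * v n ∈ squareUnits (RT (n + 1)) :=
      QuotientGroup.eq.mp h1
    obtain ⟨c, hc⟩ := h2
    have hc' : Units.map ((projDown (n + 1) : RT (n + 2) →+* RT (n + 1)) :
        RT (n + 2) →* RT (n + 1)) (v (n + 1)) * c ^ 2 = v n := by
      rw [powMonoidHom_apply] at hc
      rw [hc]
      group
    obtain ⟨sc, hsc⟩ := exists_unit_lift n c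
    refine ⟨sc, ?_⟩
    rw [← truncProj_eq_iff]
    have hval : projDown (n + 1) ((v (n + 1) : RT (n + 2))) * ((c : (RT (n+1))ˣ) : RT (n+1)) ^ 2
        = ((v n : (RT (n+1))ˣ) : RT (n+1)) := by
      have := congrArg (Units.val) hc'
      simpa using this
    rw [map_mul, map_pow, hsc, hw n, ← hval, ← hw (n + 1), projDown_truncProj]
  choose s hs using key
  set t : ℕ → Rpsˣ := fun n => ∏ k ∈ Finset.range n, s k with hts
  set U : ℕ → Rpsˣ := fun n => w n * (t n) ^ 2 with hUdef
  have hU : ∀ n : ℕ, (PowerSeries.X : Rps) ^ (n+1) ∣ (U (n+1) : Rps) - (U n : Rps) := by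
    intro n
    have ht : t (n + 1) = t n * s n := Finset.prod_range_succ _ _
    have hexp : ((U (n+1) : Rps)) - (U n : Rps)
        = ((w (n+1) : Rps) * (s n : Rps) ^ 2 - (w n : Rps)) * (t n : Rps) ^ 2 := by
      simp only [hUdef, ht, Units.val_mul, Units.val_pow_eq_pow_val]
      ring
    rw [hexp]
    exact (hs n).mul_right _
  have hUle : ∀ m n : ℕ, m ≤ n → (PowerSeries.X : Rps) ^ (m+1) ∣ (U n : Rps) - (U m : Rps) := by
    intro m n hmn
    induction n, hmn using Nat.le_induction with
    | base => simp
    | succ n hmn ih =>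
      have hsplit : ((U (n+1) : Rps)) - (U m : Rps)
          = ((U (n+1) : Rps) - (U n : Rps)) + ((U n : Rps) - (U m : Rps)) := by ring
      rw [hsplit]
      exact dvd_add ((pow_dvd_pow _ (by omega)).trans (hU n)) ih
  set u : Rps := PowerSeries.mk (fun i => PowerSeries.coeff i (U i : Rps)) with hu_def
  have hu : ∀ n : ℕ, (PowerSeries.X : Rps) ^ (n+1) ∣ u - (U n : Rps) := by
    intro n
    rw [PowerSeries.X_pow_dvd_iff]
    intro i hi
    rw [map_sub, hu_def, PowerSeries.coeff_mk]
    rw [coeff_eq_of_dvd (hUle i n (by omega)) (Nat.lt_succ_self i)]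
    exact sub_self _
  have huu : IsUnit u := by
    rw [PowerSeries.isUnit_iff_constantCoeff]
    have h0 : PowerSeries.constantCoeff u
        = PowerSeries.constantCoeff ((U 0 : Rps)) := by
      rw [← PowerSeries.coeff_zero_eq_constantCoeff_apply,
        ← PowerSeries.coeff_zero_eq_constantCoeff_apply, hu_def, PowerSeries.coeff_mk]
    rw [h0]
    exact ((U 0).isUnit).map (PowerSeries.constantCoeff)
  refine ⟨cls huu.unit, ?_⟩
  funext n
  rw [cmpMap_cls]
  have hunit : Units.map ((truncProj (n+1) : Rps →+* RT (n+1)) : Rps →* RT (n+1)) huu.unit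
      = v n * (Units.map ((truncProj (n+1) : Rps →+* RT (n+1)) : Rps →* RT (n+1)) (t n)) ^ 2 := by
    apply Units.ext
    show truncProj (n+1) (huu.unit : Rps) = _
    rw [IsUnit.unit_spec]
    rw [(truncProj_eq_iff (n+1) u (U n : Rps)).mpr (hu n)]
    have hval : ((U n : Rps)) = (w n : Rps) * (t n : Rps)^2 := by
      simp [hUdef]
    rw [hval, map_mul, map_pow, hw n]
    rfl
  rw [hunit]
  have hmem : (Units.map ((truncProj (n+1) : Rps →+* RT (n+1)) : Rps →* RT (n+1)) (t n)) ^ 2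
      ∈ squareUnits (RT (n+1)) :=
    ⟨Units.map ((truncProj (n+1) : Rps →+* RT (n+1)) : Rps →* RT (n+1)) (t n),
      by rw [powMonoidHom_apply]⟩
  exact (QuotientGroup.mk_mul_of_mem (v n) hmem).trans (hv n)

end Stmt18Aux

/-- The canonical map `G(𝔽₂[[x]]) → lim_n G(𝔽₂[x]/(xⁿ))` is an isomorphism
of abelian groups: the comparison map is injective and its range is exactly the inverse limit,
i.e. the subgroup of the product consisting of the compatible families. -/
theorem sqcl_power_series_iso_lim :
    Function.Injective cmpMap ∧
    Set.range cmpMap =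
      {g : ∀ n : ℕ, SqCl (RT (n + 1)) |
        ∀ n : ℕ, clsMap (projDown (n + 1)) (g (n + 1)) = g n} := by
  refine ⟨Stmt18Aux.injective_cmp, Set.Subset.antisymm Stmt18Aux.range_subset ?_⟩
  intro g hg
  exact Stmt18Aux.surj_onto g hg

end
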